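/- Let G be a simple graph and let u, v be a biconnected pair of vertices of G, i.e., u ≠ v, u and v are connected in G, and for every vertex w ∉ {u, v} the vertices u and v are connected in the induced subgraph of G on the complement of {w}. Then for every simple path p in G from u to v and every vertex x of p with x ∉ {u, v}, the vertices u and x also form a biconnected pair. -/

import Mathlib

/-- `u` and `v` form a biconnected pair in `G`: they are distinct, connected in `G`,
and for every vertex `w ∉ {u, v}` they remain connected in the induced subgraph of `G`
on the complement of `{w}`. -/
def BiconnectedPair {V : Type*} (G : SimpleGraph V) (u v : V) : Prop :=
  u ≠ v ∧ G.Reachable u v ∧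
    ∀ (w : V) (hwu : w ≠ u) (hwv : w ≠ v),
      (G.induce ({w}ᶜ : Set V)).Reachable
        ⟨u, by simpa using fun h => hwu h.symm⟩
        ⟨v, by simpa using fun h => hwv h.symm⟩

lemma reach_induce_of_walk {V : Type*} {G : SimpleGraph V} (s : Set V) {a b : V}
    (p : G.Walk a b) (h : ∀ y ∈ p.support, y ∈ s) :
    (G.induce s).Reachable ⟨a, h a p.start_mem_support⟩ ⟨b, h b p.end_mem_support⟩ := by
  induction p with
  | nil => rfl
  | cons hadj q ih =>
    refine (SimpleGraph.Adj.reachable ?_).trans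
      (ih fun y hy => h y (by simp [SimpleGraph.Walk.support_cons, hy]))
    exact hadj

/-- Let `u, v` be a biconnected pair of vertices of a simple graph `G`.
Then for every simple path `p` in `G` from `u` to `v` and every vertex `x` of `p` with
`x ∉ {u, v}`, the vertices `u` and `x` also form a biconnected pair. -/
theorem stmt_5 {V : Type*} (G : SimpleGraph V) (u v : V)
    (hbc : BiconnectedPair G u v) (p : G.Walk u v) (hp : p.IsPath)
    (x : V) (hx : x ∈ p.support) (hxu : x ≠ u) (hxv : x ≠ v) :
    BiconnectedPair G u x := by
  classical
  obtain ⟨huv, hreach, hbi⟩ := hbc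
  set q := p.takeUntil x hx with hq
  set r := p.dropUntil x hx with hr
  have hspec : q.append r = p := p.take_spec hx
  have hqpath : q.IsPath := hp.takeUntil hx
  have hrpath : r.IsPath := hp.dropUntil hx
  refine ⟨hxu.symm, q.reachable, ?_⟩
  intro w hwu hwx
  by_cases hwq : w ∈ q.support
  · -- w is on the u..x segment, so w ∉ r.support; go x → v → u avoiding w
    have hwv : w ≠ v := by
      rintro rfl
      have hnd : p.support.Nodup := hp.support_nodup
      rw [← hspec, SimpleGraph.Walk.support_append, List.nodup_append] at hnd
      have hvr : w = x ∨ w ∈ r.support.tail := by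
        have := r.end_mem_support
        rw [r.support_eq_cons] at this
        exact List.mem_cons.mp this
      rcases hvr with h | h
      · exact hxv h.symm
      · exact hnd.2.2 w hwq w h rfl
    have hwr : w ∉ r.support := by
      intro hwr
      have hnd : p.support.Nodup := hp.support_nodup
      rw [← hspec, SimpleGraph.Walk.support_append, List.nodup_append] at hnd
      have : w = x ∨ w ∈ r.support.tail := by
        rw [r.support_eq_cons] at hwr; exact List.mem_cons.mp hwr
      rcases this with h | h
      · exact hwx h
      · exact hnd.2.2 w hwq w h rfl
    have h1 : (G.induce ({w}ᶜ : Set V)).Reachable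
        ⟨x, by simpa using fun h => hwx h.symm⟩
        ⟨v, by simpa using fun h => hwv h.symm⟩ :=
      reach_induce_of_walk _ r (fun y hy => by
        simp only [Set.mem_compl_iff, Set.mem_singleton_iff]
        rintro rfl; exact hwr hy)
    exact (hbi w hwu hwv).trans h1.symm
  · -- w not on the u..x segment: use q directly
    exact reach_induce_of_walk _ q (fun y hy => by
      simp only [Set.mem_compl_iff, Set.mem_singleton_iff]
      rintro rfl; exact hwq hy)
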